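/- Let b ≥ 2 and let q be a nonzero polynomial with q(0) ≠ 0 such that M^r(q) divides ℓ_r · lcm_{0 ≤ i < r} M^i(q) for some nonzero ℓ_r ∈ K[x]. Then deg q ≤ 3·deg(ℓ_r)/b^r. -/
import Mathlib

open Polynomial

noncomputable section

/-- The least common multiple of a list of polynomials over a field. -/
def polyLcm {K : Type*} [Field K] (l : List K[X]) : K[X] :=
  letI := Classical.decEq K[X]
  l.foldr EuclideanDomain.lcm 1

section Aux

variable {K : Type*} [Field K]

lemma dvd_polyLcm {l : List K[X]} {p : K[X]} (hp : p ∈ l) : p ∣ polyLcm l := by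
  letI := Classical.decEq K[X]
  induction l with
  | nil => simp at hp
  | cons x xs ih =>
    rcases List.mem_cons.mp hp with rfl | hp'
    · exact EuclideanDomain.dvd_lcm_left _ _
    · exact (ih hp').trans (EuclideanDomain.dvd_lcm_right _ _)

lemma polyLcm_dvd {l : List K[X]} {c : K[X]} (h : ∀ p ∈ l, p ∣ c) : polyLcm l ∣ c := by
  letI := Classical.decEq K[X]
  induction l with
  | nil => exact one_dvd c
  | cons x xs ih =>
    exact EuclideanDomain.lcm_dvd (h x (by simp)) (ih fun p hp => h p (List.mem_cons_of_mem _ hp))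

lemma polyLcm_ne_zero {l : List K[X]} (h : ∀ p ∈ l, p ≠ 0) : polyLcm l ≠ 0 := by
  letI := Classical.decEq K[X]
  induction l with
  | nil => simp [polyLcm]
  | cons x xs ih =>
    show EuclideanDomain.lcm x (polyLcm xs) ≠ 0
    rw [Ne, EuclideanDomain.lcm_eq_zero_iff]
    push_neg
    exact ⟨h x (by simp), ih fun p hp => h p (List.mem_cons_of_mem _ hp)⟩

/-- Composition maps an lcm into a divisor of the lcm of the compositions. -/
lemma lcm_comp_dvd [DecidableEq K[X]] (a t s : K[X]) :
    (EuclideanDomain.lcm a t).comp s ∣ EuclideanDomain.lcm (a.comp s) (t.comp s) := by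
  by_cases ha : a.comp s = 0
  · rw [ha, EuclideanDomain.lcm_zero_left]; exact dvd_zero _
  by_cases ht : t.comp s = 0
  · rw [ht, EuclideanDomain.lcm_zero_right]; exact dvd_zero _
  set d := EuclideanDomain.gcd a t with hd
  set G := EuclideanDomain.gcd (a.comp s) (t.comp s) with hG
  have hGne : G ≠ 0 := by
    rw [hG, Ne, EuclideanDomain.gcd_eq_zero_iff]
    tauto
  have hGd : G ∣ d.comp s := by
    have hbez : d = a * EuclideanDomain.gcdA a t + t * EuclideanDomain.gcdB a t :=
      EuclideanDomain.gcd_eq_gcd_ab a t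
    have hcs : d.comp s = a.comp s * (EuclideanDomain.gcdA a t).comp s
        + t.comp s * (EuclideanDomain.gcdB a t).comp s := by
      rw [hbez, add_comp, mul_comp, mul_comp]
    rw [hcs]
    exact dvd_add ((EuclideanDomain.gcd_dvd_left _ _).mul_right _)
      ((EuclideanDomain.gcd_dvd_right _ _).mul_right _)
  obtain ⟨k, hk⟩ := hGd
  have key : G * EuclideanDomain.lcm (a.comp s) (t.comp s)
      = G * ((EuclideanDomain.lcm a t).comp s * k) := by
    rw [EuclideanDomain.gcd_mul_lcm]
    calc a.comp s * t.comp s = (a * t).comp s := (mul_comp _ _ _).symm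
      _ = (d * EuclideanDomain.lcm a t).comp s := by rw [hd, EuclideanDomain.gcd_mul_lcm]
      _ = d.comp s * (EuclideanDomain.lcm a t).comp s := mul_comp _ _ _
      _ = G * k * (EuclideanDomain.lcm a t).comp s := by rw [hk]
      _ = G * ((EuclideanDomain.lcm a t).comp s * k) := by ring
  exact ⟨k, mul_left_cancel₀ hGne key⟩

lemma polyLcm_comp_dvd {l : List K[X]} {s c : K[X]} (h : ∀ p ∈ l, p.comp s ∣ c) :
    (polyLcm l).comp s ∣ c := by
  letI := Classical.decEq K[X]
  induction l with
  | nil =>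
    show (1 : K[X]).comp s ∣ c
    simpa using one_dvd c
  | cons x xs ih =>
    show (EuclideanDomain.lcm x (polyLcm xs)).comp s ∣ c
    refine (lcm_comp_dvd x (polyLcm xs) s).trans (EuclideanDomain.lcm_dvd (h x (by simp)) ?_)
    exact ih fun p hp => h p (List.mem_cons_of_mem _ hp)

end Aux

set_option maxHeartbeats 1000000 in
theorem stmt_16 {K : Type*} [Field K] (b r : ℕ) (hb : 2 ≤ b) (hr : 1 ≤ r)
    (ℓr : K[X]) (hlr : ℓr ≠ 0)
    (q : K[X]) (hq : q ≠ 0) (hq0 : q.eval 0 ≠ 0)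
    (hdiv : q.comp (X ^ b ^ r) ∣
      ℓr * polyLcm ((List.range r).map fun i => q.comp (X ^ b ^ i))) :
    (q.natDegree : ℚ) ≤ 3 * (ℓr.natDegree : ℚ) / (b : ℚ) ^ r := by
  letI := Classical.decEq K[X]
  have hb0 : 0 < b := by omega
  have hcomp_ne : ∀ n : ℕ, q.comp (X ^ b ^ n) ≠ 0 := by
    intro n hzero
    rcases comp_eq_zero_iff.mp hzero with h | ⟨-, h⟩
    · exact hq h
    · have h2 := congrArg natDegree h
      rw [natDegree_X_pow, natDegree_C] at h2
      exact (pow_pos hb0 n).ne' h2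
  set l : List K[X] := (List.range r).map fun i => q.comp (X ^ b ^ i) with hl
  set T := polyLcm l with hTdef
  set A := q.comp (X ^ b ^ r) with hAdef
  have hA : A ≠ 0 := hcomp_ne r
  have hlne : ∀ p ∈ l, p ≠ 0 := by
    intro p hp
    rcases List.mem_map.mp hp with ⟨i, -, rfl⟩
    exact hcomp_ne i
  have hT : T ≠ 0 := polyLcm_ne_zero hlne
  set g := EuclideanDomain.gcd A T with hgdef
  have hgA : g ∣ A := EuclideanDomain.gcd_dvd_left _ _
  have hgT : g ∣ T := EuclideanDomain.gcd_dvd_right _ _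
  have hgne : g ≠ 0 := by
    rw [hgdef, Ne, EuclideanDomain.gcd_eq_zero_iff]
    tauto
  obtain ⟨h, hAgh⟩ := hgA
  obtain ⟨T', hTgT'⟩ := hgT
  have hgT2 : g ∣ T := Dvd.intro T' hTgT'.symm
  have hhne : h ≠ 0 := by
    rintro rfl
    rw [mul_zero] at hAgh
    exact hA hAgh
  have hcop : IsCoprime h T' := by
    have hbez : g = A * EuclideanDomain.gcdA A T + T * EuclideanDomain.gcdB A T :=
      EuclideanDomain.gcd_eq_gcd_ab A T
    refine ⟨EuclideanDomain.gcdA A T, EuclideanDomain.gcdB A T, ?_⟩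
    have hmul : g * (EuclideanDomain.gcdA A T * h + EuclideanDomain.gcdB A T * T') = g * 1 := by
      rw [mul_one]
      linear_combination -hbez - EuclideanDomain.gcdA A T * hAgh - EuclideanDomain.gcdB A T * hTgT'
    exact mul_left_cancel₀ hgne hmul
  have hdvd2 : h ∣ ℓr := by
    have h1 : g * h ∣ g * (ℓr * T') := by
      rw [← hAgh]
      refine hdiv.trans (dvd_of_eq ?_)
      rw [hTgT']
      ring
    exact hcop.dvd_of_dvd_mul_right ((mul_dvd_mul_iff_left hgne).mp h1)
  have hMg : g.comp (X ^ b) ∣ T * h := by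
    have h1 : g.comp (X ^ b) ∣ T.comp (X ^ b) := by
      rw [hTgT', mul_comp]
      exact dvd_mul_right _ _
    refine h1.trans ?_
    refine polyLcm_comp_dvd ?_
    intro p hp
    rcases List.mem_map.mp hp with ⟨i, hi, rfl⟩
    rw [List.mem_range] at hi
    have hcomp : (q.comp (X ^ b ^ i)).comp (X ^ b) = q.comp (X ^ b ^ (i + 1)) := by
      rw [comp_assoc, X_pow_comp, ← pow_mul, ← pow_succ']
    rw [hcomp]
    rcases Nat.lt_or_ge (i + 1) r with hlt | hge
    · refine dvd_mul_of_dvd_left (dvd_polyLcm ?_) h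
      exact List.mem_map.mpr ⟨i + 1, List.mem_range.mpr hlt, rfl⟩
    · have hieq : i + 1 = r := by omega
      rw [hieq, ← hAdef, hAgh]
      exact mul_dvd_mul hgT2 dvd_rfl
  have hdeg : ∀ n : ℕ, (q.comp (X ^ b ^ n)).natDegree = b ^ n * q.natDegree := by
    intro n
    rw [natDegree_comp, natDegree_X_pow, mul_comm]
  have e1 : b ^ r * q.natDegree = g.natDegree + h.natDegree := by
    rw [← hdeg r, ← hAdef, hAgh, natDegree_mul hgne hhne]
  have e2 : h.natDegree ≤ ℓr.natDegree := natDegree_le_of_dvd hdvd2 hlr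
  have e3 : T.natDegree ≤ ∑ i ∈ Finset.range r, b ^ i * q.natDegree := by
    have h1 : T ∣ l.prod := polyLcm_dvd fun p hp => List.dvd_prod hp
    have h2 : l.prod ≠ 0 := List.prod_ne_zero (fun h0 => hlne 0 h0 rfl)
    refine (natDegree_le_of_dvd h1 h2).trans ((natDegree_list_prod_le l).trans ?_)
    rw [hl, List.map_map]
    rw [show (natDegree ∘ fun i => q.comp (X ^ b ^ i)) = fun i => b ^ i * q.natDegree from
      funext fun i => hdeg i]
    exact le_of_eq rfl
  have e4 : b * g.natDegree ≤ T.natDegree + h.natDegree := by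
    have h0 : T * h ≠ 0 := mul_ne_zero hT hhne
    have h1 := natDegree_le_of_dvd hMg h0
    rw [natDegree_comp, natDegree_X_pow, natDegree_mul hT hhne] at h1
    rw [mul_comm]
    exact h1
  -- pass to ℚ
  set dq : ℚ := (q.natDegree : ℚ) with hdq
  set dl : ℚ := (ℓr.natDegree : ℚ) with hdl
  set dg : ℚ := (g.natDegree : ℚ) with hdgd
  set dh : ℚ := (h.natDegree : ℚ) with hdhd
  set dT : ℚ := (T.natDegree : ℚ) with hdTd
  set S : ℚ := ∑ i ∈ Finset.range r, (b : ℚ) ^ i with hS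
  set B : ℚ := (b : ℚ) ^ r with hB
  have hgeo : ((b : ℚ) - 1) * S = B - 1 := mul_geom_sum _ r
  have E1 : B * dq = dg + dh := by
    rw [hB, hdq, hdgd, hdhd]
    exact_mod_cast congrArg (Nat.cast : ℕ → ℚ) e1
  have E2 : dh ≤ dl := by
    rw [hdhd, hdl]
    exact_mod_cast e2
  have E3 : dT ≤ S * dq := by
    have h1 := (Nat.cast_le (α := ℚ)).mpr e3
    push_cast at h1
    rw [hdTd, hS, hdq, Finset.sum_mul]
    convert h1 using 2 with i
  have E4 : (b : ℚ) * dg ≤ dT + dh := by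
    rw [hdgd, hdTd, hdhd]
    exact_mod_cast e4
  have hbQ : (2 : ℚ) ≤ (b : ℚ) := by exact_mod_cast hb
  have hdq0 : (0 : ℚ) ≤ dq := Nat.cast_nonneg _
  have hdl0 : (0 : ℚ) ≤ dl := Nat.cast_nonneg _
  have hdh0 : (0 : ℚ) ≤ dh := Nat.cast_nonneg _
  have hdg0 : (0 : ℚ) ≤ dg := Nat.cast_nonneg _
  have hB0 : (0 : ℚ) < B := by
    rw [hB]
    positivity
  have key : (b : ℚ) * B * dq ≤ S * dq + ((b : ℚ) + 1) * dl := by nlinarith [E1, E2, E3, E4]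
  have key2 : B * dq * ((b : ℚ) * (b : ℚ) - (b : ℚ) - 1) + dq ≤ ((b : ℚ) * (b : ℚ) - 1) * dl := by
    have hmul : ((b : ℚ) - 1) * ((b : ℚ) * B * dq)
        ≤ ((b : ℚ) - 1) * (S * dq + ((b : ℚ) + 1) * dl) :=
      mul_le_mul_of_nonneg_left key (by linarith)
    have hgeo2 : ((b : ℚ) - 1) * S * dq = (B - 1) * dq := by rw [hgeo]
    nlinarith [hmul, hgeo2]
  have hX0 : (0 : ℚ) ≤ B * dq := mul_nonneg hB0.le hdq0
  have hfac : (0 : ℚ) ≤ B * dq * (2 * (b : ℚ) * (b : ℚ) - 3 * (b : ℚ) - 2) := by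
    refine mul_nonneg hX0 ?_
    nlinarith [hbQ]
  have hb2 : (0 : ℚ) < (b : ℚ) * (b : ℚ) - 1 := by nlinarith [hbQ]
  have h9 : (dq * B - 3 * dl) * ((b : ℚ) * (b : ℚ) - 1) ≤ 0 := by
    nlinarith [key2, hfac, hdq0]
  have final : dq * B ≤ 3 * dl := by nlinarith [h9, hb2]
  rw [le_div_iff₀ hB0]
  exact final
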